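/- Let P be a finite poset and H ⊆ 2^[n] a family having exactly N sets of each cardinality i for a ≤ i ≤ b. If A ⊆ 2^[n] is a family with no induced copy of P and every set in A has cardinality between a and b, then the Lubell function satisfies l_n(A) = Σ_{A∈A} 1/C(n,|A|) ≤ α^#(H,P)/N, where α^#(H,P) is the maximum size of a subfamily of H with no induced copy of P. -/

import Mathlib

open Finset

lemma perm_image_mul {n : ℕ} (ρ σ : Equiv.Perm (Fin n)) (T : Finset (Fin n)) :
    T.image ⇑(ρ * σ) = (T.image ⇑σ).image ⇑ρ := by
  rw [Finset.image_image]; rfl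

lemma fiber_card_eq {n : ℕ} (S A A' : Finset (Fin n)) (h : A.card = A'.card) :
    (Finset.univ.filter (fun σ : Equiv.Perm (Fin n) => S.image σ = A)).card =
    (Finset.univ.filter (fun σ : Equiv.Perm (Fin n) => S.image σ = A')).card := by
  have e : {x // x ∈ A} ≃ {x // x ∈ A'} :=
    Fintype.equivOfCardEq (by simpa using h)
  set τ : Equiv.Perm (Fin n) := e.extendSubtype with hτ
  have himg : A.image τ = A' := by
    apply Finset.eq_of_subset_of_card_le
    · intro y hy
      simp only [Finset.mem_image] at hy
      obtain ⟨x, hx, rfl⟩ := hy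
      exact e.extendSubtype_mem x hx
    · rw [Finset.card_image_of_injective _ τ.injective, h]
  have himg' : A'.image ⇑τ⁻¹ = A := by
    rw [← himg, Finset.image_image]
    ext x; simp
  apply Finset.card_bij' (fun σ _ => τ * σ) (fun σ _ => τ⁻¹ * σ)
  · intro σ hσ
    simp only [Finset.mem_filter, Finset.mem_univ, true_and] at hσ ⊢
    rw [perm_image_mul, hσ, himg]
  · intro σ hσ
    simp only [Finset.mem_filter, Finset.mem_univ, true_and] at hσ ⊢
    rw [perm_image_mul, hσ, himg']
  · intro σ _; simp [mul_assoc]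
  · intro σ _; simp [mul_assoc]

lemma fiber_card_choose {n : ℕ} (S A : Finset (Fin n)) (h : S.card = A.card) :
    (Finset.univ.filter (fun σ : Equiv.Perm (Fin n) => S.image σ = A)).card
      * n.choose S.card = n.factorial := by
  have key := Finset.card_eq_sum_card_fiberwise
    (f := fun σ : Equiv.Perm (Fin n) => S.image ⇑σ)
    (s := Finset.univ) (t := Finset.powersetCard S.card Finset.univ)
    (fun σ _ => by
      rw [Finset.mem_coe, Finset.mem_powersetCard_univ,
        Finset.card_image_of_injective _ σ.injective])
  have hconst : ∀ B ∈ Finset.powersetCard S.card Finset.univ,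
      (Finset.univ.filter (fun σ : Equiv.Perm (Fin n) => S.image σ = B)).card =
      (Finset.univ.filter (fun σ : Equiv.Perm (Fin n) => S.image σ = A)).card := by
    intro B hB
    rw [Finset.mem_powersetCard_univ] at hB
    exact fiber_card_eq S B A (by rw [hB, h])
  rw [Finset.sum_congr rfl hconst, Finset.sum_const, smul_eq_mul] at key
  simp only [Finset.card_powersetCard, Finset.card_univ, Fintype.card_perm,
    Fintype.card_fin] at key
  rw [key, Nat.mul_comm]


/-- A family `𝒜 ⊆ 2^[n]` contains the poset `P` as an induced subposet. -/
def containsInduced {n : ℕ} (𝒜 : Finset (Finset (Fin n))) (P : Type*) [PartialOrder P] :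
    Prop :=
  ∃ φ : P → Finset (Fin n), Function.Injective φ ∧ (∀ x, φ x ∈ 𝒜) ∧
    ∀ x y : P, x ≤ y ↔ φ x ⊆ φ y

/-- If `H ⊆ 2^[n]` has exactly `N` sets of each cardinality `i` with `a ≤ i ≤ b`,
`𝒜` has no induced copy of `P`, every set of `𝒜` has cardinality between `a` and `b`,
and `α` bounds the size of every induced-`P`-free subfamily of `H` (in particular
`α = α^#(H,P)`), then the Lubell function satisfies `Σ_{A∈𝒜} 1/C(n,|A|) ≤ α/N`. -/
theorem lubell_bound_induced (n a b : ℕ) (P : Type*) [PartialOrder P] [Fintype P]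
    (H : Finset (Finset (Fin n))) (N α : ℕ) (hN : 0 < N)
    (hlevels : ∀ i : ℕ, a ≤ i → i ≤ b → (H.filter (fun S => S.card = i)).card = N)
    (hα : ∀ 𝒮 ⊆ H, ¬ containsInduced 𝒮 P → 𝒮.card ≤ α)
    (𝒜 : Finset (Finset (Fin n))) (h𝒜 : ¬ containsInduced 𝒜 P)
    (hrange : ∀ A ∈ 𝒜, a ≤ A.card ∧ A.card ≤ b) :
    ∑ A ∈ 𝒜, (1 : ℝ) / (n.choose A.card) ≤ (α : ℝ) / N := by
  classical
  -- each permuted trace of 𝒜 in H is induced-P-free, hence has ≤ α members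
  have hsub : ∀ σ : Equiv.Perm (Fin n),
      (H.filter (fun S => S.image σ ∈ 𝒜)).card ≤ α := by
    intro σ
    apply hα _ (Finset.filter_subset _ _)
    rintro ⟨φ, hinj, hmem, hord⟩
    apply h𝒜
    refine ⟨fun x => (φ x).image σ, ?_, ?_, ?_⟩
    · intro x y hxy
      exact hinj (Finset.image_injective σ.injective hxy)
    · intro x; exact (Finset.mem_filter.mp (hmem x)).2
    · intro x y
      rw [hord x y]
      exact (Finset.image_subset_image_iff σ.injective).symm
  -- total sum over permutations
  have hsum : ∑ σ : Equiv.Perm (Fin n), (H.filter (fun S => S.image σ ∈ 𝒜)).card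
      ≤ n.factorial * α := by
    calc ∑ σ : Equiv.Perm (Fin n), (H.filter (fun S => S.image σ ∈ 𝒜)).card
        ≤ ∑ _σ : Equiv.Perm (Fin n), α := Finset.sum_le_sum fun σ _ => hsub σ
      _ = n.factorial * α := by
          rw [Finset.sum_const, smul_eq_mul, Finset.card_univ, Fintype.card_perm,
            Fintype.card_fin]
  -- swap order of summation
  have hswap : ∑ σ : Equiv.Perm (Fin n), (H.filter (fun S => S.image σ ∈ 𝒜)).card
      = ∑ A ∈ 𝒜, ∑ S ∈ H,
        (Finset.univ.filter (fun σ : Equiv.Perm (Fin n) => S.image σ = A)).card := by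
    rw [Finset.sum_comm]
    have h1 : ∀ σ : Equiv.Perm (Fin n), (H.filter (fun S => S.image σ ∈ 𝒜)).card
        = ∑ S ∈ H, if S.image σ ∈ 𝒜 then 1 else 0 := fun σ => Finset.card_filter _ _
    calc ∑ σ : Equiv.Perm (Fin n), (H.filter (fun S => S.image σ ∈ 𝒜)).card
        = ∑ σ : Equiv.Perm (Fin n), ∑ S ∈ H, if S.image σ ∈ 𝒜 then 1 else 0 := by
          exact Finset.sum_congr rfl fun σ _ => h1 σ
      _ = ∑ S ∈ H, ∑ σ : Equiv.Perm (Fin n), if S.image σ ∈ 𝒜 then 1 else 0 :=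
          Finset.sum_comm
      _ = ∑ S ∈ H, ∑ A ∈ 𝒜,
            (Finset.univ.filter (fun σ : Equiv.Perm (Fin n) => S.image σ = A)).card := by
          apply Finset.sum_congr rfl
          intro S _
          rw [← Finset.card_filter]
          rw [Finset.card_eq_sum_card_fiberwise
            (f := fun σ : Equiv.Perm (Fin n) => S.image ⇑σ) (t := 𝒜)
            (s := Finset.univ.filter (fun σ : Equiv.Perm (Fin n) => S.image σ ∈ 𝒜))
            (fun σ hσ => Finset.mem_coe.mpr (Finset.mem_filter.mp (Finset.mem_coe.mp hσ)).2)]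
          apply Finset.sum_congr rfl
          intro A hA
          congr 1
          ext σ
          simp only [Finset.mem_filter, Finset.mem_univ, true_and]
          exact ⟨fun h => h.2, fun h => ⟨h ▸ hA, h⟩⟩
  -- evaluate the inner sum for each A
  have hAcard : ∀ A ∈ 𝒜, 0 < n.choose A.card := by
    intro A hA
    exact Nat.choose_pos (by simpa using Finset.card_le_univ A)
  have hinner : ∀ A ∈ 𝒜,
      (∑ S ∈ H,
        (Finset.univ.filter (fun σ : Equiv.Perm (Fin n) => S.image σ = A)).card)
        * n.choose A.card = N * n.factorial := by
    intro A hA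
    have hrestrict : ∑ S ∈ H,
        (Finset.univ.filter (fun σ : Equiv.Perm (Fin n) => S.image σ = A)).card
        = ∑ S ∈ H.filter (fun S => S.card = A.card),
          (Finset.univ.filter (fun σ : Equiv.Perm (Fin n) => S.image σ = A)).card := by
      symm
      apply Finset.sum_subset (Finset.filter_subset _ _)
      intro S hS hS'
      simp only [Finset.mem_filter, hS, true_and] at hS'
      rw [Finset.card_eq_zero, Finset.filter_eq_empty_iff]
      intro σ _
      intro hcontra
      apply hS'
      rw [← hcontra, Finset.card_image_of_injective _ σ.injective]
    rw [hrestrict, Finset.sum_mul]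
    have : ∀ S ∈ H.filter (fun S => S.card = A.card),
        (Finset.univ.filter (fun σ : Equiv.Perm (Fin n) => S.image σ = A)).card
          * n.choose A.card = n.factorial := by
      intro S hS
      have hc : S.card = A.card := (Finset.mem_filter.mp hS).2
      rw [← hc]
      exact fiber_card_choose S A hc
    rw [Finset.sum_congr rfl this, Finset.sum_const, smul_eq_mul,
      hlevels A.card (hrange A hA).1 (hrange A hA).2]
  -- combine over ℝ
  have hfac : (0:ℝ) < n.factorial := by exact_mod_cast Nat.factorial_pos n
  have hNpos : (0:ℝ) < N := by exact_mod_cast hN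
  have key : ∑ A ∈ 𝒜, (N : ℝ) * n.factorial / (n.choose A.card) ≤ α * n.factorial := by
    have := hswap ▸ hsum
    have hcast : (∑ A ∈ 𝒜, ∑ S ∈ H,
        ((Finset.univ.filter (fun σ : Equiv.Perm (Fin n) => S.image σ = A)).card) : ℝ)
        ≤ (n.factorial : ℝ) * α := by exact_mod_cast this
    calc ∑ A ∈ 𝒜, (N : ℝ) * n.factorial / (n.choose A.card)
        = ∑ A ∈ 𝒜, ((∑ S ∈ H,
            ((Finset.univ.filter (fun σ : Equiv.Perm (Fin n) => S.image σ = A)).card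
              : ℕ)) : ℝ) := by
          apply Finset.sum_congr rfl
          intro A hA
          have h1 : ((∑ S ∈ H,
              ((Finset.univ.filter
                (fun σ : Equiv.Perm (Fin n) => S.image σ = A)).card : ℕ)) : ℝ)
              * (n.choose A.card : ℝ) = (N : ℝ) * n.factorial := by
            exact_mod_cast congrArg (Nat.cast (R := ℝ)) (hinner A hA)
          have hC : (0:ℝ) < (n.choose A.card : ℝ) := by exact_mod_cast hAcard A hA
          field_simp at h1 ⊢
          linarith [h1]
      _ ≤ (n.factorial : ℝ) * α := hcast
      _ = α * n.factorial := by ring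
  -- final algebra
  have hfinal : ∑ A ∈ 𝒜, (1 : ℝ) / (n.choose A.card)
      = (∑ A ∈ 𝒜, (N : ℝ) * n.factorial / (n.choose A.card)) / (N * n.factorial) := by
    rw [Finset.sum_div]
    apply Finset.sum_congr rfl
    intro A hA
    have hC : (0:ℝ) < (n.choose A.card : ℝ) := by exact_mod_cast hAcard A hA
    field_simp
  rw [hfinal]
  rw [div_le_div_iff₀ (by positivity) hNpos]
  calc (∑ A ∈ 𝒜, (N : ℝ) * n.factorial / (n.choose A.card)) * N
      ≤ (α * n.factorial) * N := by
        apply mul_le_mul_of_nonneg_right key (le_of_lt hNpos)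
    _ = α * (N * n.factorial) := by ring
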